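/- arXiv:2107.10681 — 2 statements merged into one kernel-verified Lean document; each statement's English description precedes it below -/
import Mathlib

section
/- The projection (L, V) ↦ L from the space Del^(n)_{(r,R)}(ℝ^d) of pairs consisting of an (r,R)-Delone set L and an n-point subset V ⊂ L (with the topology inherited from the product of the pattern space and the Hausdorff metric space of compact sets) to the space Del_{(r,R)}(ℝ^d) of (r,R)-Delone sets is a local homeomorphism. -/
open Metric Set

noncomputable section

/-- Euclidean space `ℝ^d`. -/
abbrev Euc (d : ℕ) := EuclideanSpace ℝ (Fin d)

/-- The truncation `Λ[s] = (Λ ∩ B(0,s)) ∪ ∂B(0,s)`. -/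
def cutP {d : ℕ} (Λ : Set (Euc d)) (s : ℝ) : Set (Euc d) :=
  (Λ ∩ Metric.closedBall 0 s) ∪ Metric.sphere 0 s

/-- The pattern distance
`D(Λ,Λ') = inf {1/(1+s) : d_H(Λ[s],Λ'[s]) < 1/s}` on subsets of `ℝ^d`. -/
noncomputable def patternDist {d : ℕ} (Λ Λ' : Set (Euc d)) : ℝ :=
  sInf {t : ℝ | ∃ s : ℝ, 0 < s ∧ t = 1 / (1 + s) ∧
    Metric.hausdorffDist (cutP Λ s) (cutP Λ' s) < 1 / s}

/-- `L` is `r`-uniformly discrete: every closed ball of radius `r` contains at most one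
point of `L`. -/
def IsUniformlyDiscrete {d : ℕ} (r : ℝ) (L : Set (Euc d)) : Prop :=
  ∀ x : Euc d, (L ∩ Metric.closedBall x r).Subsingleton

/-- `L` is `R`-relatively dense: every closed ball of radius `R` contains at least one
point of `L`. -/
def IsRelativelyDense {d : ℕ} (R : ℝ) (L : Set (Euc d)) : Prop :=
  ∀ x : Euc d, (L ∩ Metric.closedBall x R).Nonempty

/-- An `(r,R)`-Delone set. -/
def IsDelone {d : ℕ} (r R : ℝ) (L : Set (Euc d)) : Prop :=
  IsUniformlyDiscrete r L ∧ IsRelativelyDense R L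

/-- The space `C(ℝ^d)` of closed subsets of `ℝ^d`. -/
def ClosedSubsets (d : ℕ) := {s : Set (Euc d) // IsClosed s}

/-- The topology of the pattern metric `D` on `C(ℝ^d)`: the topology generated by the
open `D`-balls. -/
instance ClosedSubsets.instTopologicalSpace (d : ℕ) : TopologicalSpace (ClosedSubsets d) :=
  TopologicalSpace.generateFrom
    {U | ∃ (Λ : ClosedSubsets d) (ε : ℝ), 0 < ε ∧ U = {Λ' | patternDist Λ.1 Λ'.1 < ε}}

/-- Translation `t_x(Λ) = Λ - x` on the space of closed subsets. -/
def translateP {d : ℕ} (x : Euc d) (Λ : ClosedSubsets d) : ClosedSubsets d :=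
  ⟨(fun y => y - x) '' Λ.1, by
    simpa using (Homeomorph.subRight x).isClosedMap Λ.1 Λ.2⟩

open TopologicalSpace

/-- The space `Del_{(r,R)}(ℝ^d)` of `(r,R)`-Delone sets, as a subspace of the pattern
space `(C(ℝ^d), D)`. -/
def DeloneSpace (d : ℕ) (r R : ℝ) := {L : ClosedSubsets d // IsDelone r R L.1}

instance (d : ℕ) (r R : ℝ) : TopologicalSpace (DeloneSpace d r R) :=
  instTopologicalSpaceSubtype

/-- The space `Del^(n)_{(r,R)}(ℝ^d)` of pairs `(L, V)` of an `(r,R)`-Delone set `L`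
together with an `n`-point subset `V ⊆ L`, topologized as a subspace of the product of the
pattern space and the Hausdorff-metric space of nonempty compact subsets of `ℝ^d`. -/
def DelPair (d : ℕ) (r R : ℝ) (n : ℕ) :=
  {p : ClosedSubsets d × NonemptyCompacts (Euc d) //
    IsDelone r R p.1.1 ∧ (p.2 : Set (Euc d)) ⊆ p.1.1 ∧ (p.2 : Set (Euc d)).ncard = n}

instance (d : ℕ) (r R : ℝ) (n : ℕ) : TopologicalSpace (DelPair d r R n) :=
  instTopologicalSpaceSubtype

/-- The covering projection `(L, V) ↦ L`. -/
def delPairProj (d : ℕ) (r R : ℝ) (n : ℕ) (p : DelPair d r R n) : DeloneSpace d r R :=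
  ⟨p.1.1, p.2.1⟩

namespace DelonePf

open Bornology Filter

variable {d : ℕ}

lemma euc_nontrivial (hd : 0 < d) : Nontrivial (Euc d) := by
  haveI : Nonempty (Fin d) := ⟨⟨0, hd⟩⟩
  infer_instance

lemma norm_le_of_mem_cutP {Λ : Set (Euc d)} {s : ℝ} {x : Euc d} (hx : x ∈ cutP Λ s) :
    ‖x‖ ≤ s := by
  rcases hx with h | h
  · simpa using h.2
  · exact le_of_eq (by simpa using h)

lemma cutP_subset_closedBall {Λ : Set (Euc d)} {s : ℝ} :
    cutP Λ s ⊆ Metric.closedBall 0 s := fun x hx => by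
  simpa using norm_le_of_mem_cutP hx

lemma cutP_bounded {Λ : Set (Euc d)} {s : ℝ} : IsBounded (cutP Λ s) :=
  Metric.isBounded_closedBall.subset cutP_subset_closedBall

lemma sphere_subset_cutP {Λ : Set (Euc d)} {s : ℝ} :
    Metric.sphere (0 : Euc d) s ⊆ cutP Λ s := Set.subset_union_right

lemma cutP_nonempty (hd : 0 < d) {Λ : Set (Euc d)} {s : ℝ} (hs : 0 ≤ s) :
    (cutP Λ s).Nonempty := by
  haveI := euc_nontrivial hd
  exact (NormedSpace.sphere_nonempty.mpr hs).mono sphere_subset_cutP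

lemma exists_sphere_dist_le (hd : 0 < d) {s : ℝ} (hs : 0 < s) {x : Euc d} (hx : ‖x‖ ≤ s) :
    ∃ y ∈ Metric.sphere (0 : Euc d) s, dist x y ≤ s := by
  rcases eq_or_ne x 0 with rfl | hx0
  · haveI := euc_nontrivial hd
    obtain ⟨y, hy⟩ := (NormedSpace.sphere_nonempty (E := Euc d) (x := 0) (r := s)).mpr hs.le
    refine ⟨y, hy, ?_⟩
    have hyn : ‖y‖ = s := mem_sphere_zero_iff_norm.mp hy
    have : dist (0 : Euc d) y = ‖y‖ := by simp [dist_eq_norm]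
    rw [this, hyn]
  · have hxn : (0 : ℝ) < ‖x‖ := norm_pos_iff.mpr hx0
    refine ⟨(s / ‖x‖) • x, ?_, ?_⟩
    · have : ‖(s / ‖x‖) • x‖ = s := by
        rw [norm_smul, Real.norm_eq_abs, abs_of_nonneg (by positivity)]
        field_simp
      simpa [mem_sphere_zero_iff_norm] using this
    · have hxy : x - (s / ‖x‖) • x = (1 - s / ‖x‖) • x := by
        rw [sub_smul, one_smul]
      rw [dist_eq_norm, hxy, norm_smul, Real.norm_eq_abs]
      have h1 : 1 - s / ‖x‖ ≤ 0 := by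
        rw [sub_nonpos, le_div_iff₀ hxn]
        linarith
      rw [abs_of_nonpos h1]
      have h2 : -(1 - s / ‖x‖) * ‖x‖ = s - ‖x‖ := by
        field_simp
        ring
      rw [h2]
      linarith

lemma hausdorffDist_cutP_le (hd : 0 < d) (Λ Λ' : Set (Euc d)) {s : ℝ} (hs : 0 < s) :
    Metric.hausdorffDist (cutP Λ s) (cutP Λ' s) ≤ s := by
  apply Metric.hausdorffDist_le_of_mem_dist hs.le
  · intro x hx
    obtain ⟨y, hy, hyd⟩ := exists_sphere_dist_le hd hs (norm_le_of_mem_cutP hx)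
    exact ⟨y, sphere_subset_cutP hy, hyd⟩
  · intro x hx
    obtain ⟨y, hy, hyd⟩ := exists_sphere_dist_le hd hs (norm_le_of_mem_cutP hx)
    exact ⟨y, sphere_subset_cutP hy, hyd⟩

lemma patternDist_bddBelow (Λ Λ' : Set (Euc d)) :
    BddBelow {t : ℝ | ∃ s : ℝ, 0 < s ∧ t = 1 / (1 + s) ∧
      Metric.hausdorffDist (cutP Λ s) (cutP Λ' s) < 1 / s} := by
  refine ⟨0, fun t ht => ?_⟩
  obtain ⟨s, hs, rfl, -⟩ := ht
  positivity

lemma patternDist_lt_of_witness {Λ Λ' : Set (Euc d)} {s ε : ℝ} (hs : 0 < s)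
    (hε : 1 / (1 + s) < ε)
    (hH : Metric.hausdorffDist (cutP Λ s) (cutP Λ' s) < 1 / s) :
    patternDist Λ Λ' < ε :=
  csInf_lt_of_lt (patternDist_bddBelow Λ Λ') ⟨s, hs, rfl, hH⟩ hε

lemma patternDist_self_lt {Λ : Set (Euc d)} {s₀ : ℝ} (hs₀ : 0 < s₀) :
    patternDist Λ Λ < 1 / (1 + s₀) := by
  refine patternDist_lt_of_witness (s := s₀ + 1) (by linarith) ?_ ?_
  · apply one_div_lt_one_div_of_lt <;> linarith
  · rw [Metric.hausdorffDist_self_zero]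
    positivity

lemma exists_scale_of_patternDist_lt (hd : 0 < d) {Λ Λ' : Set (Euc d)} {s₀ : ℝ}
    (hs₀ : 0 < s₀) (h : patternDist Λ Λ' < 1 / (1 + s₀)) :
    ∃ s, s₀ < s ∧ Metric.hausdorffDist (cutP Λ s) (cutP Λ' s) < 1 / s := by
  have hne : Set.Nonempty {t : ℝ | ∃ s : ℝ, 0 < s ∧ t = 1 / (1 + s) ∧
      Metric.hausdorffDist (cutP Λ s) (cutP Λ' s) < 1 / s} := by
    refine ⟨1 / (1 + (1/2 : ℝ)), (1/2 : ℝ), by norm_num, rfl, ?_⟩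
    have h1 := hausdorffDist_cutP_le hd Λ Λ' (s := 1/2) (by norm_num)
    calc Metric.hausdorffDist (cutP Λ (1/2)) (cutP Λ' (1/2)) ≤ 1/2 := h1
      _ < 1 / (1/2 : ℝ) := by norm_num
  obtain ⟨t, ⟨s, hs, rfl, hH⟩, hlt⟩ := exists_lt_of_csInf_lt hne h
  refine ⟨s, ?_, hH⟩
  by_contra hc
  push_neg at hc
  have : 1 / (1 + s₀) ≤ 1 / (1 + s) := by
    apply one_div_le_one_div_of_le <;> linarith
  linarith

lemma isOpen_patternBall (Λ : ClosedSubsets d) {ε : ℝ} (hε : 0 < ε) :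
    IsOpen {Λ' : ClosedSubsets d | patternDist Λ.1 Λ'.1 < ε} :=
  TopologicalSpace.isOpen_generateFrom_of_mem ⟨Λ, ε, hε, rfl⟩

lemma uniq_point {r : ℝ} {L : Set (Euc d)} (hL : IsUniformlyDiscrete r L) {x y z : Euc d}
    (hy : y ∈ L) (hz : z ∈ L) (hdy : dist y x ≤ r) (hdz : dist z x ≤ r) : y = z :=
  hL x ⟨hy, Metric.mem_closedBall.mpr hdy⟩ ⟨hz, Metric.mem_closedBall.mpr hdz⟩


lemma key (hd : 0 < d) {r : ℝ} (hr : 0 < r) {L L' V : Set (Euc d)}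
    (hL : IsUniformlyDiscrete r L) (hL' : IsUniformlyDiscrete r L')
    (hVL : V ⊆ L) (hVfin : V.Finite) {m s : ℝ} (hm : 0 ≤ m)
    (hVm : V ⊆ Metric.closedBall 0 m) (hs1 : m + 2 ≤ s) (hs2 : 1 / s < r / 4)
    (hH : Metric.hausdorffDist (cutP L s) (cutP L' s) < 1 / s) :
    ∃ V' : Set (Euc d), V' ⊆ L' ∧ V'.Finite ∧ V'.ncard = V.ncard ∧
      (V.Nonempty → V'.Nonempty) ∧ Metric.hausdorffDist V' V ≤ 1 / s := by
  classical
  have hs0 : (0 : ℝ) < s := by linarith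
  have hfin : EMetric.hausdorffEdist (cutP L s) (cutP L' s) ≠ ⊤ :=
    Metric.hausdorffEdist_ne_top_of_nonempty_of_bounded (cutP_nonempty hd hs0.le)
      (cutP_nonempty hd hs0.le) cutP_bounded cutP_bounded
  have hstep : ∀ v ∈ V, ∃ y, y ∈ L' ∧ dist v y < 1 / s := by
    intro v hv
    have hnv : ‖v‖ ≤ m := by simpa using hVm hv
    have hvc : v ∈ cutP L s := Or.inl ⟨hVL hv, by simp; linarith⟩
    obtain ⟨y, hy, hyd⟩ := Metric.exists_dist_lt_of_hausdorffDist_lt hvc hH hfin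
    rcases hy with hy | hy
    · exact ⟨y, hy.1, hyd⟩
    · exfalso
      have hny : ‖y‖ = s := by simpa using hy
      have hd1 : s - m ≤ dist v y := by
        have h1 : ‖y‖ - ‖v‖ ≤ ‖y - v‖ := norm_sub_norm_le y v
        have h2 : dist v y = ‖y - v‖ := by rw [dist_comm, dist_eq_norm]
        rw [h2]; linarith
      have h1s : 1 / s ≤ 1 := by
        rw [div_le_one hs0]; linarith
      linarith
  set g : Euc d → Euc d := fun v =>
    if h : ∃ y, y ∈ L' ∧ dist v y < 1 / s then h.choose else v with hg
  have hg1 : ∀ v ∈ V, g v ∈ L' ∧ dist v (g v) < 1 / s := by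
    intro v hv
    have h := hstep v hv
    simp only [hg, dif_pos h]
    exact h.choose_spec
  have hinj : Set.InjOn g V := by
    intro v hv w hw he
    have h1 := (hg1 v hv).2
    have h2 := (hg1 w hw).2
    have hvw : dist v w ≤ r := by
      have ht : dist v w ≤ dist v (g v) + dist (g v) w := dist_triangle v (g v) w
      have : dist (g v) w = dist w (g w) := by rw [he, dist_comm]
      rw [this] at ht
      linarith
    exact uniq_point hL (hVL hv) (hVL hw) (by simpa using hvw) (by simp; linarith)
  refine ⟨g '' V, ?_, hVfin.image g, Set.ncard_image_of_injOn hinj,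
    fun h => h.image g, ?_⟩
  · rintro _ ⟨v, hv, rfl⟩
    exact (hg1 v hv).1
  · apply Metric.hausdorffDist_le_of_mem_dist (by positivity)
    · rintro _ ⟨v, hv, rfl⟩
      exact ⟨v, hv, by rw [dist_comm]; exact (hg1 v hv).2.le⟩
    · intro v hv
      exact ⟨g v, Set.mem_image_of_mem g hv, (hg1 v hv).2.le⟩

lemma det {r : ℝ} (hr : 0 < r) {L V V₀ : Set (Euc d)} (hL : IsUniformlyDiscrete r L)
    (hVL : V ⊆ L) (hVne : V.Nonempty) (hV₀ne : V₀.Nonempty)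
    (hb : IsBounded V) (hb₀ : IsBounded V₀)
    (hH : Metric.hausdorffDist V V₀ < r / 4) :
    V = L ∩ {x | ∃ v₀ ∈ V₀, dist x v₀ < r / 4} := by
  have hfin := Metric.hausdorffEdist_ne_top_of_nonempty_of_bounded hVne hV₀ne hb hb₀
  ext x
  constructor
  · intro hx
    exact ⟨hVL hx, Metric.exists_dist_lt_of_hausdorffDist_lt hx hH hfin⟩
  · rintro ⟨hxL, v₀, hv₀, hxv₀⟩
    have hH' : Metric.hausdorffDist V₀ V < r / 4 := by
      rwa [Metric.hausdorffDist_comm]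
    have hfin' : Metric.hausdorffEDist V₀ V ≠ ⊤ := by
      rwa [EMetric.hausdorffEdist_comm]
    obtain ⟨v, hv, hvd⟩ := Metric.exists_dist_lt_of_hausdorffDist_lt hv₀ hH' hfin'
    have hxv : dist v x ≤ r := by
      have ht : dist x v ≤ dist x v₀ + dist v₀ v := dist_triangle x v₀ v
      rw [dist_comm]
      linarith
    have := uniq_point hL hxL (hVL hv) (by simp; linarith) hxv
    rw [this]
    exact hv

end DelonePf

open DelonePf Bornology Filter Topology

/-- The projection `(L, V) ↦ L` from the space `Del^(n)_{(r,R)}(ℝ^d)` of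
pairs of an `(r,R)`-Delone set `L` and an `n`-point subset `V ⊆ L` to the space
`Del_{(r,R)}(ℝ^d)` of `(r,R)`-Delone sets is a local homeomorphism. -/
theorem delPairProj_isLocalHomeomorph (d : ℕ) (hd : 0 < d) (r R : ℝ) (hr : 0 < r)
    (hrR : r < R) (n : ℕ) (hn : 0 < n) :
    IsLocalHomeomorph (delPairProj d r R n) := by
  classical
  intro p₀
  set V₀s : Set (Euc d) := (p₀.1.2 : Set (Euc d)) with hV₀s
  have hV₀card : V₀s.ncard = n := p₀.2.2.2
  have hV₀fin : V₀s.Finite := Set.finite_of_ncard_ne_zero (by omega)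
  have hV₀ne : V₀s.Nonempty := Set.nonempty_of_ncard_ne_zero (by omega)
  have hV₀b : IsBounded V₀s := p₀.1.2.isCompact.isBounded
  have hV₀L : V₀s ⊆ p₀.1.1.1 := p₀.2.2.1
  have hL₀disc : IsUniformlyDiscrete r p₀.1.1.1 := p₀.2.1.1
  have h4r : (0 : ℝ) < 4 / r := by positivity
  obtain ⟨m, hmnn, hV₀m⟩ : ∃ m : ℝ, 0 ≤ m ∧ V₀s ⊆ Metric.closedBall 0 m := by
    obtain ⟨m₀, hm₀⟩ := (Metric.isBounded_iff_subset_closedBall (0 : Euc d)).mp hV₀b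
    exact ⟨max m₀ 0, le_max_right _ _,
      hm₀.trans (Metric.closedBall_subset_closedBall (le_max_left _ _))⟩
  obtain ⟨s₀, hs₀pos, hs₀m, hs₀r⟩ :
      ∃ s₀ : ℝ, 0 < s₀ ∧ m + 2 ≤ s₀ ∧ 1 / s₀ < r / 4 := by
    refine ⟨m + 2 + 4 / r, by linarith, by linarith, ?_⟩
    have h2 : 4 / r < m + 2 + 4 / r := by linarith
    have h3 := one_div_lt_one_div_of_lt h4r h2
    rwa [one_div_div] at h3
  set ε : ℝ := 1 / (1 + s₀) with hεdef
  have hεpos : 0 < ε := by positivity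
  set U : Set (DeloneSpace d r R) := {L | patternDist p₀.1.1.1 L.1.1 < ε} with hU
  set W : Set (DelPair d r R n) :=
    {p | patternDist p₀.1.1.1 p.1.1.1 < ε ∧
      Metric.hausdorffDist (p.1.2 : Set (Euc d)) V₀s < r / 4} with hW
  -- existence of a point of W over any L ∈ U
  have exw : ∀ L : DeloneSpace d r R, L ∈ U →
      ∃ p : DelPair d r R n, p ∈ W ∧ p.1.1 = L.1 := by
    intro L hL
    have hLε : patternDist p₀.1.1.1 L.1.1 < 1 / (1 + s₀) := hL
    obtain ⟨s, hs, hH⟩ := exists_scale_of_patternDist_lt hd hs₀pos hLε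
    have hs2 : 1 / s < r / 4 := lt_trans (one_div_lt_one_div_of_lt hs₀pos hs) hs₀r
    obtain ⟨V', hV'L, hV'fin, hV'card, hV'ne, hV'H⟩ :=
      key hd hr hL₀disc L.2.1 hV₀L hV₀fin hmnn hV₀m (by linarith) hs2 hH
    have hne : V'.Nonempty := hV'ne hV₀ne
    refine ⟨⟨(L.1, ⟨⟨V', hV'fin.isCompact⟩, hne⟩), L.2, hV'L,
      by show V'.ncard = n; rw [hV'card, hV₀card]⟩, ⟨hL, ?_⟩, rfl⟩
    calc Metric.hausdorffDist V' V₀s ≤ 1 / s := hV'H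
      _ < r / 4 := hs2
  -- uniqueness of the point of W over a given L
  have uniqW : ∀ p q : DelPair d r R n, p ∈ W → q ∈ W → p.1.1 = q.1.1 → p = q := by
    intro p q hp hq hpq
    have hdiscp : IsUniformlyDiscrete r p.1.1.1 := p.2.1.1
    have hdiscq : IsUniformlyDiscrete r q.1.1.1 := q.2.1.1
    have hfinp : (p.1.2 : Set (Euc d)).Finite :=
      Set.finite_of_ncard_ne_zero (by rw [p.2.2.2]; omega)
    have hnep : (p.1.2 : Set (Euc d)).Nonempty :=
      Set.nonempty_of_ncard_ne_zero (by rw [p.2.2.2]; omega)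
    have hfinq : (q.1.2 : Set (Euc d)).Finite :=
      Set.finite_of_ncard_ne_zero (by rw [q.2.2.2]; omega)
    have hneq : (q.1.2 : Set (Euc d)).Nonempty :=
      Set.nonempty_of_ncard_ne_zero (by rw [q.2.2.2]; omega)
    have hp2 := det hr hdiscp p.2.2.1 hnep hV₀ne hfinp.isBounded hV₀b hp.2
    have hq2 := det hr hdiscq q.2.2.1 hneq hV₀ne hfinq.isBounded hV₀b hq.2
    have hsets : p.1.1.1 = q.1.1.1 := by rw [hpq]
    have hset : (p.1.2 : Set (Euc d)) = (q.1.2 : Set (Euc d)) := by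
      rw [hp2, hq2, hsets]
    exact Subtype.ext (Prod.ext hpq (TopologicalSpace.NonemptyCompacts.ext hset))
  -- the local inverse
  set σ : DeloneSpace d r R → DelPair d r R n := fun L =>
    if h : ∃ p : DelPair d r R n, p ∈ W ∧ p.1.1 = L.1 then h.choose else p₀ with hσ
  have hσspec : ∀ L ∈ U, σ L ∈ W ∧ (σ L).1.1 = L.1 := by
    intro L hL
    have h := exw L hL
    simp only [hσ, dif_pos h]
    exact h.choose_spec
  -- continuity of the projection and of the second coordinate
  have contproj : Continuous (delPairProj d r R n) :=
    Continuous.subtype_mk (continuous_fst.comp continuous_subtype_val) _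
  have contsnd : Continuous (fun p : DelPair d r R n => p.1.2) :=
    continuous_snd.comp continuous_subtype_val
  have hUopen : IsOpen U := by
    have hU2 : U = Subtype.val ⁻¹'
        {Λ' : ClosedSubsets d | patternDist p₀.1.1.1 Λ'.1 < ε} := rfl
    rw [hU2]
    exact (isOpen_patternBall p₀.1.1 hεpos).preimage continuous_subtype_val
  have hWopen : IsOpen W := by
    have hW2 : W = (delPairProj d r R n) ⁻¹' U ∩
        (fun p : DelPair d r R n => p.1.2) ⁻¹' (Metric.ball p₀.1.2 (r / 4)) := by
      ext p
      simp only [hW, hU, Set.mem_inter_iff, Set.mem_preimage, Metric.mem_ball,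
        NonemptyCompacts.dist_eq, Set.mem_setOf_eq]
      exact Iff.rfl
    rw [hW2]
    exact (hUopen.preimage contproj).inter (Metric.isOpen_ball.preimage contsnd)
  -- continuity of the local inverse
  have hσcont : ContinuousOn σ U := by
    intro L₁ hL₁
    have hσ₁ := hσspec L₁ hL₁
    have hL₁disc : IsUniformlyDiscrete r L₁.1.1 := L₁.2.1
    have h1 : Tendsto (fun L : DeloneSpace d r R => (σ L).1.1) (𝓝[U] L₁)
        (𝓝 (σ L₁).1.1) := by
      rw [hσ₁.2]
      refine Filter.Tendsto.congr' ?_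
        ((continuous_subtype_val.tendsto L₁).mono_left nhdsWithin_le_nhds)
      filter_upwards [self_mem_nhdsWithin] with L hL
      exact ((hσspec L hL).2).symm
    have h2 : Tendsto (fun L : DeloneSpace d r R => (σ L).1.2) (𝓝[U] L₁)
        (𝓝 (σ L₁).1.2) := by
      rw [Metric.tendsto_nhds]
      intro η hη
      set V₁s : Set (Euc d) := ((σ L₁).1.2 : Set (Euc d)) with hV₁s
      have hV₁card : V₁s.ncard = n := (σ L₁).2.2.2
      have hV₁fin : V₁s.Finite := Set.finite_of_ncard_ne_zero (by omega)
      have hV₁ne : V₁s.Nonempty := Set.nonempty_of_ncard_ne_zero (by omega)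
      have hV₁b : IsBounded V₁s := (σ L₁).1.2.isCompact.isBounded
      have hV₁L : V₁s ⊆ L₁.1.1 := by
        rw [← hσ₁.2]
        exact (σ L₁).2.2.1
      obtain ⟨m₁', hm₁'⟩ := (Metric.isBounded_iff_subset_closedBall (0 : Euc d)).mp hV₁b
      set m₁ : ℝ := max m₁' 0 with hm₁
      have hm₁nn : (0 : ℝ) ≤ m₁ := le_max_right _ _
      have hV₁m : V₁s ⊆ Metric.closedBall 0 m₁ :=
        hm₁'.trans (Metric.closedBall_subset_closedBall (le_max_left _ _))
      set δ₁ : ℝ := Metric.hausdorffDist V₁s V₀s with hδ₁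
      have hδ₁lt : δ₁ < r / 4 := hσ₁.1.2
      have hδ₁nn : 0 ≤ δ₁ := Metric.hausdorffDist_nonneg
      have hslack : (0 : ℝ) < r / 4 - δ₁ := by linarith
      obtain ⟨s₁, hs₁pos, hs₁a, hs₁b, hs₁c, hs₁d⟩ :
          ∃ s₁ : ℝ, 0 < s₁ ∧ m₁ + 2 ≤ s₁ ∧ 2 / η ≤ s₁ ∧ 2 / (r / 4 - δ₁) ≤ s₁ ∧
            4 / r < s₁ := by
        refine ⟨max (m₁ + 2 + 4 / r) (max (2 / η) (2 / (r / 4 - δ₁))), ?_, ?_, ?_, ?_, ?_⟩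
        · exact lt_of_lt_of_le (by linarith : (0:ℝ) < m₁ + 2 + 4 / r) (le_max_left _ _)
        · exact le_trans (by linarith) (le_max_left _ _)
        · exact le_trans (le_max_left _ _) (le_max_right _ _)
        · exact le_trans (le_max_right _ _) (le_max_right _ _)
        · exact lt_of_lt_of_le (by linarith) (le_max_left _ _)
      have hOopen : IsOpen {L : DeloneSpace d r R |
          patternDist L₁.1.1 L.1.1 < 1 / (1 + s₁)} := by
        have : {L : DeloneSpace d r R | patternDist L₁.1.1 L.1.1 < 1 / (1 + s₁)}
            = Subtype.val ⁻¹' {Λ' : ClosedSubsets d |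
              patternDist L₁.1.1 Λ'.1 < 1 / (1 + s₁)} := rfl
        rw [this]
        exact (isOpen_patternBall L₁.1 (by positivity)).preimage continuous_subtype_val
      have hmem : {L : DeloneSpace d r R |
          patternDist L₁.1.1 L.1.1 < 1 / (1 + s₁)} ∈ 𝓝[U] L₁ :=
        mem_nhdsWithin_of_mem_nhds (hOopen.mem_nhds (patternDist_self_lt hs₁pos))
      filter_upwards [hmem, self_mem_nhdsWithin] with L hLO hLU
      obtain ⟨s, hs, hH⟩ := exists_scale_of_patternDist_lt hd hs₁pos hLO
      have hs1s : 1 / s < 1 / s₁ := one_div_lt_one_div_of_lt hs₁pos hs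
      have hr4 : 1 / s < r / 4 := by
        have h3 := one_div_lt_one_div_of_lt h4r (lt_of_lt_of_le hs₁d hs.le)
        rwa [one_div_div] at h3
      have hη' : 1 / s < η := by
        have h2' : 2 / η < s := lt_of_le_of_lt hs₁b hs
        have h3 := one_div_lt_one_div_of_lt (by positivity) h2'
        rw [one_div_div] at h3
        linarith
      have hsl : 1 / s < r / 4 - δ₁ := by
        have h2' : 2 / (r / 4 - δ₁) < s := lt_of_le_of_lt hs₁c hs
        have h3 := one_div_lt_one_div_of_lt (by positivity) h2'
        rw [one_div_div] at h3
        linarith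
      obtain ⟨V', hV'L, hV'fin, hV'card, hV'ne, hV'H⟩ :=
        key hd hr hL₁disc L.2.1 hV₁L hV₁fin hm₁nn hV₁m (by linarith) hr4 hH
      have hne : V'.Nonempty := hV'ne hV₁ne
      have hfin1 : EMetric.hausdorffEdist V' V₁s ≠ ⊤ :=
        Metric.hausdorffEdist_ne_top_of_nonempty_of_bounded hne hV₁ne
          hV'fin.isBounded hV₁b
      have hWq : Metric.hausdorffDist V' V₀s < r / 4 := by
        calc Metric.hausdorffDist V' V₀s
            ≤ Metric.hausdorffDist V' V₁s + Metric.hausdorffDist V₁s V₀s :=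
              Metric.hausdorffDist_triangle hfin1
          _ ≤ 1 / s + δ₁ := by rw [← hδ₁]; linarith [hV'H]
          _ < r / 4 := by linarith
      set q : DelPair d r R n :=
        ⟨(L.1, ⟨⟨V', hV'fin.isCompact⟩, hne⟩), L.2, hV'L,
          by show V'.ncard = n; rw [hV'card, hV₁card]⟩ with hq
      have hqW : q ∈ W := ⟨hLU, hWq⟩
      have heq : q = σ L := uniqW q (σ L) hqW (hσspec L hLU).1
        (by rw [(hσspec L hLU).2])
      rw [← heq]
      rw [NonemptyCompacts.dist_eq]
      calc Metric.hausdorffDist (q.1.2 : Set (Euc d)) ((σ L₁).1.2 : Set (Euc d))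
          = Metric.hausdorffDist V' V₁s := rfl
        _ ≤ 1 / s := hV'H
        _ < η := hη'
    exact tendsto_subtype_rng.mpr (h1.prodMk_nhds h2)
  -- assemble the partial homeomorphism
  have hp₀W : p₀ ∈ W := by
    refine ⟨patternDist_self_lt hs₀pos, ?_⟩
    show Metric.hausdorffDist V₀s V₀s < r / 4
    rw [Metric.hausdorffDist_self_zero]
    linarith
  refine ⟨⟨⟨⟨delPairProj d r R n, σ, W, U, ?_, ?_, ?_, ?_⟩,
    contproj.continuousOn, hσcont⟩, hWopen, hUopen⟩, hp₀W, rfl⟩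
  · intro p hp
    exact hp.1
  · intro L hL
    exact (hσspec L hL).1
  · intro p hp
    have h : ∃ q : DelPair d r R n, q ∈ W ∧ q.1.1 = (delPairProj d r R n p).1 :=
      ⟨p, hp, rfl⟩
    simp only [hσ, dif_pos h]
    exact uniqW h.choose p h.choose_spec.1 hp h.choose_spec.2
  · intro L hL
    exact Subtype.ext (hσspec L hL).2
end
end

section
/- The order cover ÔDel^(n)_{(r,R)}(ℝ^d), whose points are triples (L, V, χ_V) with (L,V) ∈ Del^(n)_{(r,R)}(ℝ^d) and χ_V: {1,...,n} → V a bijection, carries a topology with neighborhood base U^ε_M(L,V,χ_V) = {(L',V', g∘χ_V) : (L',V') ∈ U^ε_M(L,V)} (g the canonical bijection V → V') making the projection (L,V,χ_V) ↦ (L,V) a covering map with fibers of cardinality n!. -/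
open Metric Set

noncomputable section

open TopologicalSpace

/-- The order cover `ÔDel^(n)_{(r,R)}(ℝ^d)`: triples `(L, V, χ_V)` where
`(L,V) ∈ Del^(n)_{(r,R)}(ℝ^d)` and `χ_V : {1,…,n} → V` is a bijection (encoded as an
injective-onto-`V` tuple `Fin n → ℝ^d`), topologized as a subspace of the product. -/
def OrderCover (d : ℕ) (r R : ℝ) (n : ℕ) :=
  {q : DelPair d r R n × (Fin n → Euc d) // Set.range q.2 = (q.1.1.2 : Set (Euc d))}

instance (d : ℕ) (r R : ℝ) (n : ℕ) : TopologicalSpace (OrderCover d r R n) :=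
  instTopologicalSpaceSubtype

/-- The covering projection `(L, V, χ_V) ↦ (L, V)`. -/
def ocProj (d : ℕ) (r R : ℝ) (n : ℕ) (q : OrderCover d r R n) : DelPair d r R n := q.1.1

/-! ### Auxiliary material for the covering-map theorem -/

section Aux

open Function
open scoped Classical

variable {d : ℕ} {r R : ℝ} {n : ℕ}

/-- `A` is `r`-separated: distinct points are more than `r` apart. -/
def RSep (r : ℝ) (A : Set (Euc d)) : Prop := ∀ a ∈ A, ∀ b ∈ A, dist a b ≤ r → a = b

theorem sep_of_uniformlyDiscrete {r : ℝ} (hr : 0 ≤ r) {L : Set (Euc d)}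
    (h : IsUniformlyDiscrete r L) : RSep r L := by
  intro a ha b hb hab
  exact (h a ⟨hb, by simpa [Metric.mem_closedBall, dist_comm] using hab⟩
    ⟨ha, by simpa [Metric.mem_closedBall] using hr⟩).symm

theorem RSep.mono {r : ℝ} {A B : Set (Euc d)} (h : RSep r B) (hAB : A ⊆ B) : RSep r A :=
  fun a ha b hb => h a (hAB ha) b (hAB hb)

/-- The point of `A` within `r/4` of `x`, if it exists (junk value `x` otherwise). -/
noncomputable def mpt (r : ℝ) (A : Set (Euc d)) (x : Euc d) : Euc d :=
  if h : ∃ a, a ∈ A ∧ dist x a < r / 4 then h.choose else x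

theorem mpt_spec {r : ℝ} {A : Set (Euc d)} {x : Euc d}
    (h : ∃ a, a ∈ A ∧ dist x a < r / 4) :
    mpt r A x ∈ A ∧ dist x (mpt r A x) < r / 4 := by
  rw [mpt, dif_pos h]
  exact ⟨h.choose_spec.1, h.choose_spec.2⟩

theorem mpt_eq {r : ℝ} (hr : 0 < r) {A : Set (Euc d)} (hA : RSep r A) {x a : Euc d}
    (ha : a ∈ A) (hd : dist x a < r / 4) : mpt r A x = a := by
  obtain ⟨hm, hd'⟩ := mpt_spec ⟨a, ha, hd⟩
  refine hA _ hm _ ha ?_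
  have h1 := dist_triangle (mpt r A x) x a
  rw [dist_comm (mpt r A x) x] at h1
  linarith

theorem mpt_congr {r : ℝ} (hr : 0 < r) {A : Set (Euc d)} (hA : RSep r A) {x y : Euc d}
    (hx : ∃ a, a ∈ A ∧ dist x a < r / 4) (hy : ∃ a, a ∈ A ∧ dist y a < r / 4)
    (hxy : dist x y < r / 2) : mpt r A x = mpt r A y := by
  obtain ⟨hxm, hxd⟩ := mpt_spec hx
  obtain ⟨hym, hyd⟩ := mpt_spec hy
  refine hA _ hxm _ hym ?_
  have h1 := dist_triangle (mpt r A x) x (mpt r A y)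
  have h2 := dist_triangle x y (mpt r A y)
  rw [dist_comm (mpt r A x) x] at h1
  linarith

theorem mpt_stab {r : ℝ} (hr : 0 < r) {A B : Set (Euc d)} (hB : RSep r B) {x : Euc d}
    {δ : ℝ} (hδ : δ ≤ r / 2)
    (hx : ∃ a, a ∈ A ∧ dist x a < r / 4) (hx' : ∃ a, a ∈ B ∧ dist x a < r / 4)
    (hAB : hausdorffDist A B < δ) (hne : EMetric.hausdorffEdist A B ≠ ⊤) :
    dist (mpt r A x) (mpt r B x) < δ := by
  obtain ⟨hv, hvd⟩ := mpt_spec hx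
  obtain ⟨hv', hvd'⟩ := mpt_spec hx'
  obtain ⟨w, hw, hvw⟩ := exists_dist_lt_of_hausdorffDist_lt hv hAB hne
  have hBw : mpt r B x = w := by
    refine hB _ hv' _ hw ?_
    have h1 := dist_triangle (mpt r B x) x w
    have h2 := dist_triangle x (mpt r A x) w
    rw [dist_comm (mpt r B x) x] at h1
    linarith
  rw [hBw]
  exact hvw

/-- The point set `V` of a pair `(L,V)`. -/
abbrev VS (p : DelPair d r R n) : Set (Euc d) := (p.1.2 : Set (Euc d))

theorem VS_sep (hr : 0 < r) (p : DelPair d r R n) : RSep r (VS p) :=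
  (sep_of_uniformlyDiscrete hr.le p.2.1.1).mono p.2.2.1

theorem VS_ncard (p : DelPair d r R n) : (VS p).ncard = n := p.2.2.2

theorem VS_fin (hn : 0 < n) (p : DelPair d r R n) : (VS p).Finite :=
  Set.finite_of_ncard_ne_zero (by rw [VS_ncard]; omega)

theorem VS_edist_ne_top (p q : DelPair d r R n) :
    EMetric.hausdorffEdist (VS p) (VS q) ≠ ⊤ :=
  hausdorffEdist_ne_top_of_nonempty_of_bounded p.1.2.nonempty q.1.2.nonempty
    p.1.2.isCompact.isBounded q.1.2.isCompact.isBounded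

theorem VS_hausdorffDist (p q : DelPair d r R n) :
    hausdorffDist (VS p) (VS q) = dist p.1.2 q.1.2 := rfl

theorem tuple_inj (hn : 0 < n) {V : Set (Euc d)} (hV : V.ncard = n) {f : Fin n → Euc d}
    (hrange : Set.range f = V) : Function.Injective f := by
  have hfin : V.Finite := Set.finite_of_ncard_ne_zero (by rw [hV]; omega)
  haveI := hfin.to_subtype
  have hcard : Nat.card V = n := by rw [Nat.card_coe_set_eq, hV]
  have hsurj : Function.Surjective (fun i => (⟨f i, hrange ▸ Set.mem_range_self i⟩ : V)) := by
    rintro ⟨x, hx⟩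
    rw [← hrange] at hx
    obtain ⟨i, hi⟩ := hx
    exact ⟨i, Subtype.ext hi⟩
  have hbij := (Nat.bijective_iff_surjective_and_card _).mpr
    ⟨hsurj, by simp [Nat.card_eq_fintype_card, hcard]⟩
  intro i j hij
  exact hbij.1 (Subtype.ext hij)

theorem range_eq_of_inj (hn : 0 < n) {V : Set (Euc d)} (hV : V.ncard = n) {f : Fin n → Euc d}
    (hsub : Set.range f ⊆ V) (hinj : Function.Injective f) : Set.range f = V := by
  have hfin : V.Finite := Set.finite_of_ncard_ne_zero (by rw [hV]; omega)
  refine Set.eq_of_subset_of_ncard_le hsub ?_ hfin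
  have hr' : (Set.range f).ncard = n := by
    rw [← Nat.card_coe_set_eq, Nat.card_range_of_injective hinj,
      Nat.card_eq_fintype_card, Fintype.card_fin]
  rw [hV, hr']

theorem matchTuple (hr : 0 < r) (hn : 0 < n) {A B : Set (Euc d)}
    (hA : A.ncard = n) (hAsep : RSep r A) (hB : B.ncard = n) (hBsep : RSep r B)
    (hex : ∀ x ∈ A, ∃ b, b ∈ B ∧ dist x b < r / 4)
    {f : Fin n → Euc d} (hf : Set.range f = A) :
    Set.range (fun i => mpt r B (f i)) = B ∧ ∀ i, dist (f i) (mpt r B (f i)) < r / 4 := by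
  have hfmem : ∀ i, f i ∈ A := fun i => hf ▸ Set.mem_range_self i
  have hspec := fun i => mpt_spec (hex (f i) (hfmem i))
  have hfi : Function.Injective f := tuple_inj hn hA hf
  have hinj : Function.Injective (fun i => mpt r B (f i)) := by
    intro i j hij
    simp only at hij
    apply hfi
    refine hAsep _ (hfmem i) _ (hfmem j) ?_
    have h1 := dist_triangle (f i) (mpt r B (f i)) (f j)
    have h2 := dist_triangle (mpt r B (f j)) (f j) (f j)
    have h3 := (hspec i).2
    have h4 := (hspec j).2
    rw [hij] at h1
    have h5 := dist_triangle (mpt r B (f j)) (f j) (f j)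
    have h6 : dist (mpt r B (f j)) (f j) = dist (f j) (mpt r B (f j)) := dist_comm _ _
    calc dist (f i) (f j) ≤ dist (f i) (mpt r B (f j)) + dist (mpt r B (f j)) (f j) :=
          dist_triangle _ _ _
      _ ≤ r := by rw [hij] at h3; rw [h6]; linarith
  refine ⟨range_eq_of_inj hn hB (Set.range_subset_iff.mpr fun i => (hspec i).1) hinj,
    fun i => (hspec i).2⟩

/-- The base neighborhood in `DelPair` around `p₀`. -/
def Ubase (p₀ : DelPair d r R n) : Set (DelPair d r R n) :=
  {p | dist p.1.2 p₀.1.2 < r / 8}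

theorem cont_VScpt : Continuous (fun p : DelPair d r R n => p.1.2) :=
  continuous_snd.comp continuous_subtype_val

theorem cont_base : Continuous (fun q : OrderCover d r R n => q.1.1) :=
  continuous_fst.comp continuous_subtype_val

theorem cont_tuple (i : Fin n) : Continuous (fun q : OrderCover d r R n => q.1.2 i) :=
  (continuous_apply i).comp (continuous_snd.comp continuous_subtype_val)

theorem isOpen_Ubase (p₀ : DelPair d r R n) : IsOpen (Ubase p₀) :=
  isOpen_lt (cont_VScpt.dist continuous_const) continuous_const

theorem mem_Ubase_self (hr : 0 < r) (p₀ : DelPair d r R n) : p₀ ∈ Ubase p₀ := by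
  simp only [Ubase, Set.mem_setOf_eq, dist_self]
  linarith

theorem Ubase_hd {p₀ p : DelPair d r R n} (hp : p ∈ Ubase p₀) :
    hausdorffDist (VS p) (VS p₀) < r / 8 := by
  rw [VS_hausdorffDist]
  exact hp

theorem Ubase_ex {p₀ p : DelPair d r R n} (hr : 0 < r) (hp : p ∈ Ubase p₀) {x : Euc d}
    (hx : x ∈ VS p) : ∃ a, a ∈ VS p₀ ∧ dist x a < r / 4 := by
  obtain ⟨y, hy, hxy⟩ := exists_dist_lt_of_hausdorffDist_lt hx
    (lt_of_lt_of_le (Ubase_hd hp) (by linarith : r/8 ≤ r/4)) (VS_edist_ne_top p p₀)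
  exact ⟨y, hy, hxy⟩

theorem Ubase_ex' {p₀ p : DelPair d r R n} (hr : 0 < r) (hp : p ∈ Ubase p₀) {x : Euc d}
    (hx : x ∈ VS p₀) : ∃ a, a ∈ VS p ∧ dist x a < r / 4 := by
  obtain ⟨y, hy, hxy⟩ := exists_dist_lt_of_hausdorffDist_lt hx
    (lt_of_lt_of_le (by rw [hausdorffDist_comm]; exact Ubase_hd hp) (by linarith : r/8 ≤ r/4))
    (VS_edist_ne_top p₀ p)
  exact ⟨y, hy, hxy⟩

/-- Range of the tuple of an order-cover point. -/
theorem oc_range (q : OrderCover d r R n) : Set.range q.1.2 = VS q.1.1 := q.2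

noncomputable def fibEquiv (hn : 0 < n) (p : DelPair d r R n) :
    {q : OrderCover d r R n // ocProj d r R n q = p} ≃ (Fin n ≃ ↥(VS p)) :=
  { toFun := fun q =>
      Equiv.ofBijective
        (fun i => (⟨q.1.1.2 i, by
            have h := oc_range q.1
            rw [show (q.1.1.1 : DelPair d r R n) = p from q.2] at h
            exact h ▸ Set.mem_range_self i⟩ : ↥(VS p)))
        (by
          have hrange : Set.range q.1.1.2 = VS p := by
            have h := oc_range q.1
            rw [show (q.1.1.1 : DelPair d r R n) = p from q.2] at h
            exact h
          have hfin : (VS p).Finite := VS_fin hn p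
          haveI := hfin.to_subtype
          refine (Nat.bijective_iff_injective_and_card _).mpr ⟨?_, ?_⟩
          · intro i j hij
            exact tuple_inj hn (VS_ncard p) hrange (congrArg Subtype.val hij)
          · have h2 : Nat.card ↥(VS p) = n := by
              rw [Nat.card_coe_set_eq, VS_ncard]
            rw [Nat.card_eq_fintype_card, Fintype.card_fin, h2])
    invFun := fun e =>
      ⟨⟨(p, fun i => ((e i : ↥(VS p)) : Euc d)), by
        ext x
        constructor
        · rintro ⟨i, rfl⟩; exact (e i).2
        · intro hx
          obtain ⟨i, hi⟩ := e.surjective ⟨x, hx⟩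
          exact ⟨i, congrArg Subtype.val hi⟩⟩, rfl⟩
    left_inv := by
      rintro ⟨⟨⟨p', f⟩, hcond⟩, hproj⟩
      have hp : p' = p := hproj
      subst hp
      rfl
    right_inv := fun e => Equiv.ext fun i => Subtype.ext rfl }

theorem fib_card (hn : 0 < n) (p : DelPair d r R n) :
    Nat.card {q : OrderCover d r R n // ocProj d r R n q = p} = Nat.factorial n := by
  classical
  have hfin : (VS p).Finite := VS_fin hn p
  haveI : Fintype ↥(VS p) := hfin.fintype
  have hcard : Fintype.card ↥(VS p) = n := by
    rw [← Nat.card_eq_fintype_card, Nat.card_coe_set_eq, VS_ncard]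
  have e₀ : Fin n ≃ ↥(VS p) := (Fintype.equivFinOfCardEq hcard).symm
  rw [Nat.card_congr (fibEquiv hn p), Nat.card_eq_fintype_card, Fintype.card_equiv e₀,
    Fintype.card_fin]

theorem fib_nonempty (hn : 0 < n) (p : DelPair d r R n) :
    Nonempty ↥(ocProj d r R n ⁻¹' {p}) := by
  classical
  have hfin : (VS p).Finite := VS_fin hn p
  haveI : Fintype ↥(VS p) := hfin.fintype
  have hcard : Fintype.card ↥(VS p) = n := by
    rw [← Nat.card_eq_fintype_card, Nat.card_coe_set_eq, VS_ncard]
  have e₀ : Fin n ≃ ↥(VS p) := (Fintype.equivFinOfCardEq hcard).symm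
  obtain ⟨q, hq⟩ := (fibEquiv hn p).symm e₀
  exact ⟨⟨q, by simp [Set.mem_preimage, hq]⟩⟩

theorem fib_discrete (hr : 0 < r) (p₀ : DelPair d r R n) :
    DiscreteTopology ↥(ocProj d r R n ⁻¹' {p₀}) := by
  rw [discreteTopology_iff_isOpen_singleton]
  rintro ⟨s, hs⟩
  have hs' : ocProj d r R n s = p₀ := hs
  have hW : IsOpen (⋂ i, (fun q : OrderCover d r R n => q.1.2 i) ⁻¹'
      Metric.ball (s.1.2 i) (r / 2)) :=
    isOpen_iInter_of_finite fun i => (Metric.isOpen_ball).preimage (cont_tuple i)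
  have hkey : (Subtype.val : ↥(ocProj d r R n ⁻¹' {p₀}) → OrderCover d r R n) ⁻¹'
      (⋂ i, (fun q : OrderCover d r R n => q.1.2 i) ⁻¹' Metric.ball (s.1.2 i) (r / 2))
      = {⟨s, hs⟩} := by
    ext ⟨t, ht⟩
    simp only [Set.mem_preimage, Set.mem_iInter, Metric.mem_ball, Set.mem_singleton_iff]
    constructor
    · intro hd'
      have ht' : ocProj d r R n t = p₀ := ht
      have htr : Set.range t.1.2 = VS p₀ := by
        have h := oc_range t
        rw [show (t.1.1 : DelPair d r R n) = p₀ from ht'] at h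
        exact h
      have hsr : Set.range s.1.2 = VS p₀ := by
        have h := oc_range s
        rw [show (s.1.1 : DelPair d r R n) = p₀ from hs'] at h
        exact h
      have htup : t.1.2 = s.1.2 := by
        funext i
        refine VS_sep hr p₀ _ (htr ▸ Set.mem_range_self i) _ (hsr ▸ Set.mem_range_self i) ?_
        have := hd' i
        linarith
      apply Subtype.ext
      apply Subtype.ext
      have hb : t.1.1 = s.1.1 := ht'.trans hs'.symm
      exact Prod.ext hb htup
    · intro hts
      have hts' : t = s := congrArg Subtype.val hts
      subst hts'
      intro i
      simp only [dist_self]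
      linarith
  have : IsOpen ({⟨s, hs⟩} : Set ↥(ocProj d r R n ⁻¹' {p₀})) := by
    rw [← hkey]
    exact hW.preimage continuous_subtype_val
  exact this

noncomputable def τmap (p₀ : DelPair d r R n) (q : OrderCover d r R n) : Fin n → Euc d :=
  fun i => mpt r (VS p₀) (q.1.2 i)

noncomputable def Fmap (hn : 0 < n) (p₀ : DelPair d r R n) (q : OrderCover d r R n) :
    DelPair d r R n × ↥(ocProj d r R n ⁻¹' {p₀}) :=
  (q.1.1,
    if h : Set.range (τmap p₀ q) = (p₀.1.2 : Set (Euc d)) then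
      ⟨⟨(p₀, τmap p₀ q), h⟩, rfl⟩
    else (fib_nonempty hn p₀).some)

noncomputable def σmap (p₀ : DelPair d r R n) (p : DelPair d r R n)
    (s : ↥(ocProj d r R n ⁻¹' {p₀})) : Fin n → Euc d :=
  fun i => mpt r (VS p) (s.1.1.2 i)

noncomputable def Gmap (p₀ : DelPair d r R n)
    (x : DelPair d r R n × ↥(ocProj d r R n ⁻¹' {p₀})) : OrderCover d r R n :=
  if h : Set.range (σmap p₀ x.1 x.2) = (x.1.1.2 : Set (Euc d)) then ⟨(x.1, σmap p₀ x.1 x.2), h⟩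
  else x.2.1

theorem fib_range {p₀ : DelPair d r R n} (s : ↥(ocProj d r R n ⁻¹' {p₀})) :
    Set.range s.1.1.2 = VS p₀ := by
  have h := oc_range s.1
  rw [show (s.1.1.1 : DelPair d r R n) = p₀ from s.2] at h
  exact h

theorem src_match (hr : 0 < r) (hn : 0 < n) {p₀ : DelPair d r R n} {q : OrderCover d r R n}
    (hq : q.1.1 ∈ Ubase p₀) :
    Set.range (τmap p₀ q) = VS p₀ ∧ ∀ i, dist (q.1.2 i) (τmap p₀ q i) < r / 4 :=
  matchTuple hr hn (VS_ncard q.1.1) (VS_sep hr q.1.1) (VS_ncard p₀) (VS_sep hr p₀)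
    (fun _ hx => Ubase_ex hr hq hx) (oc_range q)

theorem tgt_match (hr : 0 < r) (hn : 0 < n) {p₀ p : DelPair d r R n}
    (hp : p ∈ Ubase p₀) (s : ↥(ocProj d r R n ⁻¹' {p₀})) :
    Set.range (σmap p₀ p s) = VS p ∧ ∀ i, dist (s.1.1.2 i) (σmap p₀ p s i) < r / 4 :=
  matchTuple hr hn (VS_ncard p₀) (VS_sep hr p₀) (VS_ncard p) (VS_sep hr p)
    (fun _ hx => Ubase_ex' hr hp hx) (fib_range s)

noncomputable def trivAt (hr : 0 < r) (hn : 0 < n) (p₀ : DelPair d r R n) :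
    Bundle.Trivialization (↥(ocProj d r R n ⁻¹' {p₀})) (ocProj d r R n) where
  toFun := Fmap hn p₀
  invFun := Gmap p₀
  source := ocProj d r R n ⁻¹' Ubase p₀
  target := Ubase p₀ ×ˢ Set.univ
  baseSet := Ubase p₀
  open_baseSet := isOpen_Ubase p₀
  source_eq := rfl
  target_eq := rfl
  proj_toFun := fun _ _ => rfl
  open_source := (isOpen_Ubase p₀).preimage cont_base
  open_target := (isOpen_Ubase p₀).prod isOpen_univ
  map_source' := fun _ hq => ⟨hq, Set.mem_univ _⟩
  map_target' := by
    rintro ⟨p, s⟩ ⟨hp, -⟩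
    have h := (tgt_match hr hn hp s).1
    show Gmap p₀ (p, s) ∈ _
    rw [show Gmap p₀ (p, s) = ⟨(p, σmap p₀ p s), h⟩ from dif_pos h]
    exact hp
  left_inv' := by
    intro q hq
    have hq' : q.1.1 ∈ Ubase p₀ := hq
    obtain ⟨hrange, hdist⟩ := src_match hr hn hq'
    simp only [Fmap]
    rw [dif_pos hrange]
    have hσ : σmap p₀ q.1.1 ⟨⟨(p₀, τmap p₀ q), hrange⟩, rfl⟩ = q.1.2 := by
      funext i
      show mpt r (VS q.1.1) (τmap p₀ q i) = q.1.2 i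
      exact mpt_eq hr (VS_sep hr q.1.1) (oc_range q ▸ Set.mem_range_self i)
        (by rw [dist_comm]; exact hdist i)
    simp only [Gmap, hσ]
    exact (dif_pos (by rw [hσ]; exact oc_range q)).trans (Subtype.ext rfl)
  right_inv' := by
    rintro ⟨p, s⟩ ⟨hp, -⟩
    obtain ⟨hrange, hdist⟩ := tgt_match hr hn hp s
    have hs := fib_range s
    rw [show Gmap p₀ (p, s) = ⟨(p, σmap p₀ p s), hrange⟩ from dif_pos hrange]
    have hτ : τmap p₀ ⟨(p, σmap p₀ p s), hrange⟩ = s.1.1.2 := by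
      funext i
      show mpt r (VS p₀) (σmap p₀ p s i) = s.1.1.2 i
      exact mpt_eq hr (VS_sep hr p₀) (hs ▸ Set.mem_range_self i)
        (by rw [dist_comm]; exact hdist i)
    simp only [Fmap, hτ]
    rw [dif_pos hs]
    refine Prod.ext rfl ?_
    apply Subtype.ext
    apply Subtype.ext
    exact Prod.ext (show p₀ = s.1.1.1 from (show s.1.1.1 = p₀ from s.2).symm) rfl
  continuousOn_toFun := by
    intro q hq
    have hq' : q.1.1 ∈ Ubase p₀ := hq
    apply ContinuousAt.continuousWithinAt
    have hopen : IsOpen ((ocProj d r R n ⁻¹' Ubase p₀) ∩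
        ⋂ i, (fun q' : OrderCover d r R n => q'.1.2 i) ⁻¹' Metric.ball (q.1.2 i) (r / 4)) :=
      ((isOpen_Ubase p₀).preimage cont_base).inter
        (isOpen_iInter_of_finite fun i => Metric.isOpen_ball.preimage (cont_tuple i))
    have hmem : q ∈ (ocProj d r R n ⁻¹' Ubase p₀) ∩
        ⋂ i, (fun q' : OrderCover d r R n => q'.1.2 i) ⁻¹' Metric.ball (q.1.2 i) (r / 4) :=
      ⟨hq, Set.mem_iInter.mpr fun i => by
        simp only [Set.mem_preimage, Metric.mem_ball, dist_self]; linarith⟩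
    have hconst : ∀ q' ∈ (ocProj d r R n ⁻¹' Ubase p₀) ∩
        ⋂ i, (fun q'' : OrderCover d r R n => q''.1.2 i) ⁻¹' Metric.ball (q.1.2 i) (r / 4),
        Fmap hn p₀ q' = (q'.1.1, (Fmap hn p₀ q).2) := by
      rintro q' ⟨hq'1, hq'2⟩
      have hτ : τmap p₀ q' = τmap p₀ q := by
        funext i
        show mpt r (VS p₀) (q'.1.2 i) = mpt r (VS p₀) (q.1.2 i)
        refine mpt_congr hr (VS_sep hr p₀)
          (Ubase_ex hr hq'1 (oc_range q' ▸ Set.mem_range_self i))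
          (Ubase_ex hr hq' (oc_range q ▸ Set.mem_range_self i)) ?_
        have hi := Set.mem_iInter.mp hq'2 i
        simp only [Set.mem_preimage, Metric.mem_ball] at hi
        linarith
      simp only [Fmap, hτ]
    have heq : Fmap hn p₀ =ᶠ[nhds q] fun q' => (q'.1.1, (Fmap hn p₀ q).2) :=
      Filter.eventually_of_mem (hopen.mem_nhds hmem) hconst
    exact ((cont_base.prodMk continuous_const).continuousAt).congr heq.symm
  continuousOn_invFun := by
    haveI hdisc : DiscreteTopology ↥(ocProj d r R n ⁻¹' {p₀}) := fib_discrete hr p₀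
    rintro ⟨p, s⟩ ⟨hp, -⟩
    apply ContinuousAt.continuousWithinAt
    refine (Topology.IsEmbedding.subtypeVal (p := fun q : DelPair d r R n × (Fin n → Euc d) => Set.range q.2 = (q.1.1.2 : Set (Euc d)))).isInducing.continuousAt_iff.mpr ?_
    have hs := fib_range s
    have hg : ContinuousAt (fun x : DelPair d r R n × ↥(ocProj d r R n ⁻¹' {p₀}) =>
        ((x.1, fun i => mpt r (VS x.1) (s.1.1.2 i)) :
          DelPair d r R n × (Fin n → Euc d))) (p, s) := by
      refine ContinuousAt.prodMk continuousAt_fst ?_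
      refine continuousAt_pi.mpr fun i => ?_
      refine Metric.tendsto_nhds.mpr fun ε hε => ?_
      have hδpos : 0 < min ε (r / 2) := lt_min hε (by linarith)
      have hopen : IsOpen {x : DelPair d r R n × ↥(ocProj d r R n ⁻¹' {p₀}) |
          x.1 ∈ Ubase p₀ ∧ dist x.1.1.2 p.1.2 < min ε (r / 2)} := by
        refine IsOpen.inter ?_ ?_
        · exact (isOpen_Ubase p₀).preimage continuous_fst
        · exact isOpen_lt ((cont_VScpt.comp continuous_fst).dist continuous_const)
            continuous_const
      refine Filter.eventually_of_mem (hopen.mem_nhds ⟨hp, by simp [dist_self, hδpos]⟩) ?_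
      rintro ⟨p', s'⟩ ⟨hp', hd'⟩
      have hx : s.1.1.2 i ∈ VS p₀ := hs ▸ Set.mem_range_self i
      have h1 := Ubase_ex' hr hp' hx
      have h2 := Ubase_ex' hr hp hx
      have hhd : hausdorffDist (VS p') (VS p) < min ε (r / 2) := by
        rw [VS_hausdorffDist]; exact hd'
      exact lt_of_lt_of_le
        (mpt_stab hr (VS_sep hr p) (min_le_right _ _) h1 h2 hhd (VS_edist_ne_top p' p))
        (min_le_left _ _)
    have hNopen : IsOpen {x : DelPair d r R n × ↥(ocProj d r R n ⁻¹' {p₀}) |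
        x.1 ∈ Ubase p₀ ∧ x.2 = s} := by
      refine IsOpen.inter ?_ ?_
      · exact (isOpen_Ubase p₀).preimage continuous_fst
      · exact (isOpen_discrete {s}).preimage continuous_snd
    have heq : (Subtype.val ∘ Gmap p₀) =ᶠ[nhds (p, s)]
        (fun x : DelPair d r R n × ↥(ocProj d r R n ⁻¹' {p₀}) =>
          ((x.1, fun i => mpt r (VS x.1) (s.1.1.2 i)) :
            DelPair d r R n × (Fin n → Euc d))) := by
      refine Filter.eventually_of_mem (hNopen.mem_nhds ⟨hp, rfl⟩) ?_
      rintro ⟨p', s'⟩ ⟨hp', hs'⟩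
      have hs2 : s' = s := hs'
      subst hs2
      have h := (tgt_match hr hn hp' s').1
      show Subtype.val (Gmap p₀ (p', s')) = _
      rw [show Gmap p₀ (p', s') = ⟨(p', σmap p₀ p' s'), h⟩ from dif_pos h]
      rfl
    exact hg.congr heq.symm

end Aux

/-- The order cover `ÔDel^(n)_{(r,R)}(ℝ^d)`, whose points are triples
`(L, V, χ_V)` with `(L,V) ∈ Del^(n)_{(r,R)}(ℝ^d)` and `χ_V : {1,…,n} → V` a bijection,
carries a topology making the projection `(L, V, χ_V) ↦ (L, V)` a covering map whose
fibers have cardinality `n!`. -/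
theorem orderCover_isCoveringMap (d : ℕ) (hd : 0 < d) (r R : ℝ) (hr : 0 < r)
    (hrR : r < R) (n : ℕ) (hn : 0 < n) :
    IsCoveringMap (ocProj d r R n) ∧
      ∀ p : DelPair d r R n,
        Nat.card {q : OrderCover d r R n // ocProj d r R n q = p} = Nat.factorial n := by
  refine ⟨fun p₀ => by haveI := fib_discrete hr p₀; exact IsEvenlyCovered.of_trivialization (t := trivAt hr hn p₀) (mem_Ubase_self hr p₀),
    fun p => fib_card hn p⟩
end
end
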